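/- The one-step map Φ_h of the tangential momentum method q_{n+1/2} = q_n + (h/2)p_n, p_{n+1} = p_n − h∇V(q_{n+1/2}) − hG(q_{n+1/2})ᵀλ, q_{n+1} = q_{n+1/2} + (h/2)p_{n+1}, with λ chosen so that G(q_{n+1})p_{n+1} = 0, is symmetric: assuming G(q_n)p_n = 0, exchanging h ↦ −h and (q_n,p_n) ↔ (q_{n+1},p_{n+1}) in the defining equations yields the same set of equations, i.e. Φ_{−h}⁻¹ = Φ_h on the set {(q,p) : G(q)p = 0}. -/
import Mathlib


open Matrix

/-- One step of the tangential momentum method: `q_{n+1/2} = q_n + (h/2)p_n`,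
`p_{n+1} = p_n - h∇V(q_{n+1/2}) - hG(q_{n+1/2})ᵀλ`,
`q_{n+1} = q_{n+1/2} + (h/2)p_{n+1}`, with the tangency constraints
`G(q_n)p_n = 0` and `G(q_{n+1})p_{n+1} = 0`. -/
def TangentialStep {N L : ℕ}
    (G : (Fin N → ℝ) → Matrix (Fin L) (Fin N) ℝ)
    (gradV : (Fin N → ℝ) → (Fin N → ℝ))
    (h : ℝ) (z z' : (Fin N → ℝ) × (Fin N → ℝ)) : Prop :=
  ∃ lam : Fin L → ℝ,
    G z.1 *ᵥ z.2 = 0 ∧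
    z'.2 = z.2 - h • gradV (z.1 + (h/2) • z.2)
             - h • ((G (z.1 + (h/2) • z.2))ᵀ *ᵥ lam) ∧
    z'.1 = (z.1 + (h/2) • z.2) + (h/2) • z'.2 ∧
    G z'.1 *ᵥ z'.2 = 0

private theorem tangential_mp {N L : ℕ}
    (G : (Fin N → ℝ) → Matrix (Fin L) (Fin N) ℝ)
    (gradV : (Fin N → ℝ) → (Fin N → ℝ))
    (h : ℝ) (z z' : (Fin N → ℝ) × (Fin N → ℝ))
    (H : TangentialStep G gradV h z z') :
    TangentialStep G gradV (-h) z' z := by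
  obtain ⟨lam, h1, h2, h3, h4⟩ := H
  have hm : z'.1 + (-h / 2) • z'.2 = z.1 + (h / 2) • z.2 := by
    rw [h3]; module
  refine ⟨lam, h4, ?_, ?_, h1⟩
  · rw [hm, h2]; module
  · rw [hm]; module

/-- the tangential momentum method is symmetric: exchanging
`h ↦ -h` and `(q_n,p_n) ↔ (q_{n+1},p_{n+1})` yields the same set of equations,
i.e. `Φ_{-h}⁻¹ = Φ_h` on the set `{(q,p) : G(q)p = 0}`. -/
theorem tangential_momentum_method_symmetric
    {N L : ℕ}
    (G : (Fin N → ℝ) → Matrix (Fin L) (Fin N) ℝ)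
    (gradV : (Fin N → ℝ) → (Fin N → ℝ))
    (h : ℝ) (z z' : (Fin N → ℝ) × (Fin N → ℝ)) :
    TangentialStep G gradV h z z' ↔ TangentialStep G gradV (-h) z' z := by
  constructor
  · exact tangential_mp G gradV h z z'
  · intro H
    have := tangential_mp G gradV (-h) z' z H
    rwa [neg_neg] at this
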